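/- Let f be a piecewise contracting interval map with D ⊂ X̃, and let x ∈ X̃ have a periodic itinerary of period p. Then ω(x) is a finite set {x₀*, ..., x_{p-1}*}, where for each k, x_k* is the unique point of the nested intersection of atoms ⋂_{j≥1} A_{θ_k,...,θ_{k+jp-1}} determined by the itinerary θ of x. -/

import Mathlib

open Filter Topology Set

/-- A piecewise contracting interval map on `X = [c 0, c N]` with contraction pieces
`X_i` delimited by the points `c 0 < c 1 < … < c N`, contraction rate `lam ∈ (0,1)`,
and `fe i` the (unique) continuous `lam`-Lipschitz extension of `f` restricted to the
`i`-th piece to its closure `[c (i-1), c i]`. The pieces are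
`X_1 = [c 0, c 1)`, `X_i = (c (i-1), c i)` for `1 < i < N`, `X_N = (c (N-1), c N]`. -/
structure PCIM where
  N : ℕ
  hN : 2 ≤ N
  c : ℕ → ℝ
  lam : ℝ
  f : ℝ → ℝ
  fe : ℕ → ℝ → ℝ
  hc : StrictMonoOn c (Set.Iic N)
  hlam : lam ∈ Set.Ioo (0 : ℝ) 1
  hmap : Set.MapsTo f (Set.Icc (c 0) (c N)) (Set.Icc (c 0) (c N))
  hfe_lip : ∀ i, 1 ≤ i → i ≤ N →
    ∀ x ∈ Set.Icc (c (i - 1)) (c i), ∀ y ∈ Set.Icc (c (i - 1)) (c i),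
      |fe i x - fe i y| ≤ lam * |x - y|
  hfe_eq : ∀ i, 1 ≤ i → i ≤ N → ∀ x ∈ Set.Ioo (c (i - 1)) (c i), fe i x = f x
  hfe_left : fe 1 (c 0) = f (c 0)
  hfe_right : fe N (c N) = f (c N)

namespace PCIM

variable (P : PCIM)

/-- The phase space `X = [c 0, c N]`. -/
def X : Set ℝ := Set.Icc (P.c 0) (P.c P.N)

/-- The `i`-th contraction piece (`1 ≤ i ≤ N`). -/
def piece (i : ℕ) : Set ℝ :=
  Set.Ioo (P.c (i - 1)) (P.c i)
    ∪ (if i = 1 then {P.c 0} else (∅ : Set ℝ))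
    ∪ (if i = P.N then {P.c P.N} else (∅ : Set ℝ))

/-- `Δ`, the set of interior boundary points of the pieces. -/
def Δ : Set ℝ := {y | ∃ i, 1 ≤ i ∧ i < P.N ∧ y = P.c i}

/-- `X̃ = ⋂ n, f⁻ⁿ(X \ Δ)`: points whose whole forward orbit stays in `X` and avoids `Δ`. -/
def Xt : Set ℝ := {x | ∀ n : ℕ, P.f^[n] x ∈ P.X \ P.Δ}

/-- Forward orbit of `x`. -/
def orbit (x : ℝ) : Set ℝ := Set.range fun n : ℕ => P.f^[n] x

/-- The ω-limit set of `x`: limits of subsequences of the forward orbit. -/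
def omega (x : ℝ) : Set ℝ :=
  {y | ∃ φ : ℕ → ℕ, StrictMono φ ∧
    Filter.Tendsto (fun n => P.f^[φ n] x) Filter.atTop (nhds y)}

/-- `d_i^- = f_i (c_i)`, the left lateral limit of `f` at `c i`. -/
def dminus (i : ℕ) : ℝ := P.fe i (P.c i)

/-- `d_i^+ = f_{i+1} (c_i)`, the right lateral limit of `f` at `c i`. -/
def dplus (i : ℕ) : ℝ := P.fe (i + 1) (P.c i)

/-- `D⁻ = {d_1^-, …, d_{N-1}^-}`. -/
def Dminus : Set ℝ := {y | ∃ i, 1 ≤ i ∧ i < P.N ∧ y = P.dminus i}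

/-- `D⁺ = {d_1^+, …, d_{N-1}^+}`. -/
def Dplus : Set ℝ := {y | ∃ i, 1 ≤ i ∧ i < P.N ∧ y = P.dplus i}

/-- `D`, the set of all one-sided limits of `f` at endpoints of the pieces. -/
def D : Set ℝ := P.Dminus ∪ P.Dplus ∪ {P.fe 1 (P.c 0), P.fe P.N (P.c P.N)}

/-- `A` is pseudo-invariant: for every `x ∈ A` at least one one-sided limit of `f`
at `x` (i.e. some `fe i x` with `x` in the closure of the `i`-th piece) belongs to `A`. -/
def PseudoInvariant (A : Set ℝ) : Prop :=
  ∀ x ∈ A, ∃ i, 1 ≤ i ∧ i ≤ P.N ∧ x ∈ Set.Icc (P.c (i - 1)) (P.c i) ∧ P.fe i x ∈ A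

/-- `F_i(A) = closure (f (A ∩ X_i))`. -/
def Fmap (i : ℕ) (A : Set ℝ) : Set ℝ := closure (P.f '' (A ∩ P.piece i))

/-- For a word `w = [i_1, …, i_n]`, the set `F_{i_n} ∘ … ∘ F_{i_1} (X)`. -/
def atomOf (w : List ℕ) : Set ℝ := w.foldl (fun S i => P.Fmap i S) P.X

/-- `A` is an atom of generation `n`. -/
def IsAtomGen (n : ℕ) (A : Set ℝ) : Prop :=
  ∃ w : List ℕ, w.length = n ∧ (∀ i ∈ w, 1 ≤ i ∧ i ≤ P.N) ∧
    A = P.atomOf w ∧ A.Nonempty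

/-- `Lam n` is `Λ_{n+1}` of the paper: `Λ_1 = closure (f(X \ Δ))`,
`Λ_{n+1} = closure (f(Λ_n \ Δ))`. -/
def Lam (P : PCIM) : ℕ → Set ℝ
  | 0 => closure (P.f '' (P.X \ P.Δ))
  | n + 1 => closure (P.f '' (P.Lam n \ P.Δ))

/-- The attractor `Λ = ⋂_{n ≥ 1} Λ_n`. -/
def attractor : Set ℝ := ⋂ n : ℕ, P.Lam n

/-- `c i ∈ Δ_lr(x)`: the boundary point `c i` is left-right recurrently visited by the
orbit of `x`. -/
def lrVisited (x : ℝ) (i : ℕ) : Prop :=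
  1 ≤ i ∧ i < P.N ∧
  ∃ l r : ℕ → ℕ, StrictMono l ∧ StrictMono r ∧
    (∀ j, P.f^[l j] x ∈ P.piece i) ∧ (∀ j, P.f^[r j] x ∈ P.piece (i + 1)) ∧
    Filter.Tendsto (fun j => P.f^[l j] x) Filter.atTop (nhds (P.c i)) ∧
    Filter.Tendsto (fun j => P.f^[r j] x) Filter.atTop (nhds (P.c i))

/-- `c i ∈ Δ_lr`: `c i` is left-right recurrently visited by the orbit of some point
of `X̃`. -/
def inΔlr (i : ℕ) : Prop := ∃ x ∈ P.Xt, P.lrVisited x i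

/-- The set `Δ_lr ⊆ Δ`. -/
def ΔlrSet : Set ℝ := {y | ∃ i, P.inΔlr i ∧ y = P.c i}

/-- The relation `∼⁺` on `Δ_lr`: `c_i ∼⁺ c_j` iff `c_i = c_j` or
(`c_i ∈ Δ_lr(d_j^+)` and `c_j ∈ Δ_lr(d_i^+)`). -/
def simP (a b : ℝ) : Prop :=
  a = b ∨ ∃ i j, P.inΔlr i ∧ P.inΔlr j ∧ a = P.c i ∧ b = P.c j ∧
    P.lrVisited (P.dplus j) i ∧ P.lrVisited (P.dplus i) j

/-- The relation `≼⁺` (on representatives): `[c_i] ≼⁺ [c_j]` iff `[c_i] = [c_j]` or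
`c_i ∈ Δ_lr(d_j^+)`. -/
def preP (a b : ℝ) : Prop :=
  P.simP a b ∨ ∃ i j, P.inΔlr i ∧ P.inΔlr j ∧ a = P.c i ∧ b = P.c j ∧
    P.lrVisited (P.dplus j) i

/-- `[c i]` is a minimal class for the partial order `≼⁺`. -/
def MinimalClass (i : ℕ) : Prop :=
  P.inΔlr i ∧ ∀ j, P.inΔlr j → P.preP (P.c j) (P.c i) → P.simP (P.c j) (P.c i)

/-- `f` is injective on each contraction piece. -/
def InjPieces : Prop := ∀ i, 1 ≤ i → i ≤ P.N → Set.InjOn P.f (P.piece i)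

/-- `f` is (strictly) increasing on each contraction piece. -/
def IncrPieces : Prop := ∀ i, 1 ≤ i → i ≤ P.N → StrictMonoOn P.f (P.piece i)

/-- `x` is a periodic point of `f`. -/
def IsPeriodic (x : ℝ) : Prop := ∃ p : ℕ, 1 ≤ p ∧ P.f^[p] x = x

/-- `η` is the itinerary of `x`: `f^[n] x ∈ X_{η n}` for all `n`. -/
def IsItinerary (x : ℝ) (η : ℕ → ℕ) : Prop :=
  ∀ n, 1 ≤ η n ∧ η n ≤ P.N ∧ P.f^[n] x ∈ P.piece (η n)

end PCIM

/-- The word of length `n` of the sequence `η` starting at position `t`. -/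
def wordAt (η : ℕ → ℕ) (t n : ℕ) : List ℕ := (List.range n).map fun m => η (t + m)

/-- The complexity function of the sequence `η`: the number of distinct words of
length `n` occurring in `η`. -/
noncomputable def complexity (η : ℕ → ℕ) (n : ℕ) : ℕ := Set.ncard {w : List ℕ | ∃ t, w = wordAt η t n}

namespace PCIM

variable (P : PCIM)

lemma c_le_c {i j : ℕ} (hij : i ≤ j) (hj : j ≤ P.N) : P.c i ≤ P.c j :=
  P.hc.monotoneOn (Set.mem_Iic.2 (hij.trans hj)) (Set.mem_Iic.2 hj) hij

lemma piece_subset_Icc {i : ℕ} (h1 : 1 ≤ i) (hN : i ≤ P.N) :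
    P.piece i ⊆ Set.Icc (P.c (i - 1)) (P.c i) := by
  have hle : P.c (i - 1) ≤ P.c i := P.c_le_c (Nat.sub_le i 1) hN
  intro y hy
  rcases hy with (hy | hy) | hy
  · exact Set.Ioo_subset_Icc_self hy
  · split_ifs at hy with h
    · simp only [Set.mem_singleton_iff] at hy
      subst hy; subst h
      exact ⟨le_of_eq rfl, hle⟩
    · exact absurd hy (Set.notMem_empty y)
  · split_ifs at hy with h
    · simp only [Set.mem_singleton_iff] at hy
      subst hy; subst h
      exact ⟨hle, le_rfl⟩
    · exact absurd hy (Set.notMem_empty y)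

lemma Icc_subset_X {i : ℕ} (h1 : 1 ≤ i) (hN : i ≤ P.N) :
    Set.Icc (P.c (i - 1)) (P.c i) ⊆ P.X :=
  Set.Icc_subset_Icc (P.c_le_c (Nat.zero_le _) ((Nat.sub_le i 1).trans hN)) (P.c_le_c hN le_rfl)

lemma f_eq_fe {i : ℕ} (h1 : 1 ≤ i) (hN : i ≤ P.N) {y : ℝ} (hy : y ∈ P.piece i) :
    P.f y = P.fe i y := by
  rcases hy with (hy | hy) | hy
  · exact (P.hfe_eq i h1 hN y hy).symm
  · split_ifs at hy with h
    · simp only [Set.mem_singleton_iff] at hy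
      subst hy; subst h
      exact P.hfe_left.symm
    · exact absurd hy (Set.notMem_empty y)
  · split_ifs at hy with h
    · simp only [Set.mem_singleton_iff] at hy
      subst hy; subst h
      exact P.hfe_right.symm
    · exact absurd hy (Set.notMem_empty y)

lemma Fmap_subset_X {i : ℕ} (h1 : 1 ≤ i) (hN : i ≤ P.N) (S : Set ℝ) :
    P.Fmap i S ⊆ P.X := by
  have h1' : P.f '' (S ∩ P.piece i) ⊆ P.X := by
    rintro _ ⟨a, ha, rfl⟩
    exact P.hmap (P.Icc_subset_X h1 hN (P.piece_subset_Icc h1 hN ha.2))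
  exact (closure_minimal h1' isClosed_Icc)

lemma Fmap_mono {i : ℕ} {S T : Set ℝ} (h : S ⊆ T) : P.Fmap i S ⊆ P.Fmap i T :=
  closure_mono (Set.image_mono (Set.inter_subset_inter_left _ h))

lemma bounded_of_subset_X {S : Set ℝ} (h : S ⊆ P.X) : Bornology.IsBounded S :=
  Bornology.IsBounded.subset (Metric.isBounded_Icc (P.c 0) (P.c P.N)) h

lemma diam_Fmap_le {i : ℕ} (h1 : 1 ≤ i) (hN : i ≤ P.N) {S : Set ℝ} (hS : S ⊆ P.X) :
    Metric.diam (P.Fmap i S) ≤ P.lam * Metric.diam S := by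
  have hnn : 0 ≤ P.lam * Metric.diam S :=
    mul_nonneg P.hlam.1.le Metric.diam_nonneg
  rw [Fmap, Metric.diam_closure]
  refine Metric.diam_le_of_forall_dist_le hnn ?_
  rintro _ ⟨a, ⟨haS, hap⟩, rfl⟩ _ ⟨b, ⟨hbS, hbp⟩, rfl⟩
  rw [P.f_eq_fe h1 hN hap, P.f_eq_fe h1 hN hbp, Real.dist_eq]
  calc |P.fe i a - P.fe i b| ≤ P.lam * |a - b| :=
        P.hfe_lip i h1 hN a (P.piece_subset_Icc h1 hN hap) b (P.piece_subset_Icc h1 hN hbp)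
    _ ≤ P.lam * Metric.diam S := by
        refine mul_le_mul_of_nonneg_left ?_ P.hlam.1.le
        rw [← Real.dist_eq]
        exact Metric.dist_le_diam_of_mem (P.bounded_of_subset_X hS) haS hbS

lemma foldl_subset_X : ∀ (w : List ℕ), (∀ i ∈ w, 1 ≤ i ∧ i ≤ P.N) → ∀ S : Set ℝ, S ⊆ P.X →
    w.foldl (fun S i => P.Fmap i S) S ⊆ P.X := by
  intro w
  induction w with
  | nil => intro _ S hS; simpa using hS
  | cons i w ih =>
    intro hw S hS
    simp only [List.foldl_cons]
    exact ih (fun j hj => hw j (List.mem_cons_of_mem _ hj)) _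
      (P.Fmap_subset_X (hw i (List.mem_cons_self)).1 (hw i (List.mem_cons_self)).2 S)

lemma diam_foldl_le : ∀ (w : List ℕ), (∀ i ∈ w, 1 ≤ i ∧ i ≤ P.N) → ∀ S : Set ℝ, S ⊆ P.X →
    Metric.diam (w.foldl (fun S i => P.Fmap i S) S) ≤ P.lam ^ w.length * Metric.diam S := by
  intro w
  induction w with
  | nil => intro _ S _; simp
  | cons i w ih =>
    intro hw S hS
    have hi := hw i (List.mem_cons_self)
    simp only [List.foldl_cons, List.length_cons]
    calc Metric.diam (w.foldl (fun S i => P.Fmap i S) (P.Fmap i S))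
        ≤ P.lam ^ w.length * Metric.diam (P.Fmap i S) :=
          ih (fun j hj => hw j (List.mem_cons_of_mem _ hj)) _ (P.Fmap_subset_X hi.1 hi.2 S)
      _ ≤ P.lam ^ w.length * (P.lam * Metric.diam S) :=
          mul_le_mul_of_nonneg_left (P.diam_Fmap_le hi.1 hi.2 hS)
            (pow_nonneg P.hlam.1.le _)
      _ = P.lam ^ (w.length + 1) * Metric.diam S := by ring

lemma foldl_mono : ∀ (w : List ℕ) (S T : Set ℝ), S ⊆ T →
    w.foldl (fun S i => P.Fmap i S) S ⊆ w.foldl (fun S i => P.Fmap i S) T := by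
  intro w
  induction w with
  | nil => intro S T h; simpa using h
  | cons i w ih =>
    intro S T h
    simp only [List.foldl_cons]
    exact ih _ _ (P.Fmap_mono h)

lemma foldl_isClosed : ∀ (w : List ℕ) (S : Set ℝ), IsClosed S →
    IsClosed (w.foldl (fun S i => P.Fmap i S) S) := by
  intro w
  induction w with
  | nil => intro S h; simpa using h
  | cons i w ih =>
    intro S h
    simp only [List.foldl_cons]
    exact ih _ isClosed_closure

lemma orbit_mem_atom {x : ℝ} {θ : ℕ → ℕ} (hx : x ∈ P.Xt) (hθ : P.IsItinerary x θ)
    (t : ℕ) : ∀ n : ℕ, P.f^[t + n] x ∈ P.atomOf (wordAt θ t n) := by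
  intro n
  induction n with
  | zero =>
    simpa [wordAt, atomOf] using (hx t).1
  | succ n ih =>
    have hw : wordAt θ t (n + 1) = wordAt θ t n ++ [θ (t + n)] := by
      simp [wordAt, List.range_succ]
    have ha : P.atomOf (wordAt θ t (n + 1)) = P.Fmap (θ (t + n)) (P.atomOf (wordAt θ t n)) := by
      rw [hw, atomOf, atomOf, List.foldl_append]
      simp
    rw [ha, ← Nat.add_assoc, Function.iterate_succ_apply']
    exact subset_closure ⟨P.f^[t + n] x, ⟨ih, (hθ (t + n)).2.2⟩, rfl⟩

end PCIM

lemma wordAt_add (η : ℕ → ℕ) (t a b : ℕ) :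
    wordAt η t (a + b) = wordAt η t a ++ wordAt η (t + a) b := by
  simp [wordAt, List.range_add, Function.comp, add_assoc]

lemma wordAt_shift {η : ℕ → ℕ} {p : ℕ} (hper : ∀ n, η (n + p) = η n) (t n : ℕ) :
    wordAt η (t + p) n = wordAt η t n := by
  unfold wordAt
  refine List.map_congr_left ?_
  intro m _
  have : t + p + m = t + m + p := by ring
  rw [this, hper]

lemma wordAt_length (η : ℕ → ℕ) (t n : ℕ) : (wordAt η t n).length = n := by
  simp [wordAt]


/-- If `D ⊆ X̃` and `x ∈ X̃` has a periodic itinerary `θ` of period `p`, then `ω(x)`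
is the finite set `{x₀*, …, x_{p-1}*}` where `x_k*` is the unique point of the nested
intersection of the atoms `A_{θ_k, …, θ_{k + j p - 1}}`, `j ≥ 1`. -/
theorem stmt11 (P : PCIM) (hD : P.D ⊆ P.Xt) (x : ℝ) (hx : x ∈ P.Xt)
    (θ : ℕ → ℕ) (hθ : P.IsItinerary x θ) (p : ℕ) (hp : 1 ≤ p)
    (hperiodic : ∀ n, θ (n + p) = θ n) :
    ∃ xs : Fin p → ℝ,
      (∀ k : Fin p, (⋂ j : ℕ, P.atomOf (wordAt θ k ((j + 1) * p))) = {xs k}) ∧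
      P.omega x = Set.range xs := by
  classical
  have hp0 : 0 < p := hp
  set C := Metric.diam P.X with hC
  have hCnn : 0 ≤ C := Metric.diam_nonneg
  have hvalid : ∀ t n : ℕ, ∀ i ∈ wordAt θ t n, 1 ≤ i ∧ i ≤ P.N := by
    intro t n i hi
    simp only [wordAt, List.mem_map, List.mem_range] at hi
    obtain ⟨m, _, rfl⟩ := hi
    exact ⟨(hθ (t + m)).1, (hθ (t + m)).2.1⟩
  have hword : ∀ k j : ℕ,
      wordAt θ k ((j + 1 + 1) * p) = wordAt θ k p ++ wordAt θ k ((j + 1) * p) := by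
    intro k j
    have h1 : (j + 1 + 1) * p = p + (j + 1) * p := by ring
    rw [h1, wordAt_add, wordAt_shift hperiodic]
  have hBsucc : ∀ k j : ℕ,
      P.atomOf (wordAt θ k ((j + 1 + 1) * p)) ⊆ P.atomOf (wordAt θ k ((j + 1) * p)) := by
    intro k j
    rw [hword k j]
    show (wordAt θ k p ++ wordAt θ k ((j + 1) * p)).foldl (fun S i => P.Fmap i S) P.X
        ⊆ P.atomOf (wordAt θ k ((j + 1) * p))
    rw [List.foldl_append]
    exact P.foldl_mono _ _ _ (P.foldl_subset_X _ (hvalid k p) _ subset_rfl)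
  have hBanti : ∀ k : ℕ, Antitone fun j => P.atomOf (wordAt θ k ((j + 1) * p)) :=
    fun k => antitone_nat_of_succ_le (hBsucc k)
  have hBmem : ∀ k j : ℕ, P.f^[k + (j + 1) * p] x ∈ P.atomOf (wordAt θ k ((j + 1) * p)) :=
    fun k j => P.orbit_mem_atom hx hθ k ((j + 1) * p)
  have hBsub : ∀ k j : ℕ, P.atomOf (wordAt θ k ((j + 1) * p)) ⊆ P.X :=
    fun k j => P.foldl_subset_X _ (hvalid k _) _ subset_rfl
  have hBclosed : ∀ k j : ℕ, IsClosed (P.atomOf (wordAt θ k ((j + 1) * p))) :=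
    fun k j => P.foldl_isClosed _ _ isClosed_Icc
  have hXcompact : IsCompact P.X := isCompact_Icc
  have hBcompact : ∀ k j : ℕ, IsCompact (P.atomOf (wordAt θ k ((j + 1) * p))) :=
    fun k j => hXcompact.of_isClosed_subset (hBclosed k j) (hBsub k j)
  have hBdiam : ∀ k j : ℕ,
      Metric.diam (P.atomOf (wordAt θ k ((j + 1) * p))) ≤ P.lam ^ ((j + 1) * p) * C := by
    intro k j
    have h := P.diam_foldl_le _ (hvalid k ((j + 1) * p)) P.X subset_rfl
    rwa [wordAt_length] at h
  have hpowlt : P.lam ^ p < 1 := pow_lt_one₀ P.hlam.1.le P.hlam.2 hp0.ne'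
  have htend : Tendsto (fun j : ℕ => P.lam ^ ((j + 1) * p) * C) atTop (nhds 0) := by
    have h1 : Tendsto (fun n : ℕ => (P.lam ^ p) ^ n * C) atTop (nhds 0) := by
      simpa using
        (tendsto_pow_atTop_nhds_zero_of_lt_one (pow_nonneg P.hlam.1.le p) hpowlt).mul_const C
    have h2 := h1.comp (tendsto_add_atTop_nat 1)
    refine h2.congr fun j => ?_
    show (P.lam ^ p) ^ (j + 1) * C = P.lam ^ ((j + 1) * p) * C
    rw [← pow_mul, mul_comm p (j + 1)]
  have key : ∀ k : ℕ, ∃ y : ℝ, (⋂ j : ℕ, P.atomOf (wordAt θ k ((j + 1) * p))) = {y} := by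
    intro k
    obtain ⟨y, hy⟩ := IsCompact.nonempty_iInter_of_sequence_nonempty_isCompact_isClosed
      (fun j => P.atomOf (wordAt θ k ((j + 1) * p))) (hBsucc k)
      (fun j => ⟨_, hBmem k j⟩) (hBcompact k 0) (hBclosed k)
    refine ⟨y, Set.eq_singleton_iff_unique_mem.mpr ⟨hy, fun z hz => ?_⟩⟩
    have hd : ∀ j : ℕ, dist z y ≤ P.lam ^ ((j + 1) * p) * C := fun j =>
      le_trans (Metric.dist_le_diam_of_mem (P.bounded_of_subset_X (hBsub k j))
        (Set.mem_iInter.mp hz j) (Set.mem_iInter.mp hy j)) (hBdiam k j)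
    exact dist_le_zero.mp (ge_of_tendsto' htend hd)
  choose y hy using key
  have hymem : ∀ k j : ℕ, y k ∈ P.atomOf (wordAt θ k ((j + 1) * p)) := by
    intro k j
    have h : y k ∈ ⋂ j : ℕ, P.atomOf (wordAt θ k ((j + 1) * p)) := by
      rw [hy k]; exact Set.mem_singleton _
    exact Set.mem_iInter.mp h j
  refine ⟨fun k => y ↑k, fun k => hy ↑k, ?_⟩
  ext z
  constructor
  · intro hz
    obtain ⟨φ, hφ, hlim⟩ := hz
    obtain ⟨b, hb⟩ := Finite.exists_infinite_fiber
      (fun n : ℕ => (⟨φ n % p, Nat.mod_lt _ hp0⟩ : Fin p))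
    have hbinf : {n : ℕ | φ n % p = (b : ℕ)}.Infinite := by
      have h := Set.infinite_coe_iff.mp hb
      refine h.mono ?_
      intro n hn
      simp only [Set.mem_preimage, Set.mem_singleton_iff] at hn
      exact congrArg Fin.val hn
    refine ⟨b, ?_⟩
    refine (eq_of_forall_dist_le fun ε hε => ?_)
    obtain ⟨j, hj⟩ := (htend.eventually_lt_const (half_pos hε)).exists
    obtain ⟨Nl, hNl⟩ := Metric.tendsto_atTop.mp hlim (ε / 2) (half_pos hε)
    obtain ⟨n, hn, hngt⟩ := hbinf.exists_gt (max Nl ((j + 1) * p))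
    have hnk : φ n % p = (b : ℕ) := hn
    have hφn : (j + 1) * p < φ n := lt_of_lt_of_le (lt_of_le_of_lt (le_max_right _ _) hngt) hφ.le_apply
    set t := φ n with ht
    set m := t / p with hm
    have hmj : j + 1 ≤ m := (Nat.le_div_iff_mul_le hp0).mpr hφn.le
    have hm1 : m - 1 + 1 = m := Nat.succ_pred_eq_of_pos (lt_of_lt_of_le (Nat.succ_pos j) hmj)
    have hteq : (b : ℕ) + m * p = t := by
      rw [hm, ← hnk]
      exact Nat.mod_add_div' t p
    have hmemt : P.f^[t] x ∈ P.atomOf (wordAt θ (b : ℕ) ((j + 1) * p)) := by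
      have h := hBanti (b : ℕ) (by omega : j ≤ m - 1) (hBmem (b : ℕ) (m - 1))
      simp only [] at h
      rw [hm1, hteq] at h
      exact h
    have hd1 : dist (y (b : ℕ)) (P.f^[t] x) ≤ P.lam ^ ((j + 1) * p) * C :=
      le_trans (Metric.dist_le_diam_of_mem (P.bounded_of_subset_X (hBsub _ j))
        (hymem _ j) hmemt) (hBdiam _ j)
    have hd2 : dist (P.f^[t] x) z < ε / 2 := hNl n (le_of_lt (lt_of_le_of_lt (le_max_left _ _) hngt))
    calc dist (y (b : ℕ)) z ≤ dist (y (b : ℕ)) (P.f^[t] x) + dist (P.f^[t] x) z :=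
          dist_triangle _ _ _
      _ ≤ ε / 2 + ε / 2 := add_le_add (le_trans hd1 hj.le) hd2.le
      _ = ε := by ring
  · rintro ⟨k, rfl⟩
    refine ⟨fun j => (k : ℕ) + (j + 1) * p, ?_, ?_⟩
    · apply strictMono_nat_of_lt_succ
      intro n
      exact Nat.add_lt_add_left (mul_lt_mul_of_pos_right (by omega) hp0) _
    · rw [tendsto_iff_dist_tendsto_zero]
      refine squeeze_zero (fun j => dist_nonneg) (fun j => ?_) htend
      exact le_trans (Metric.dist_le_diam_of_mem (P.bounded_of_subset_X (hBsub _ j))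
        (hBmem _ j) (hymem _ j)) (hBdiam _ j)
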